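/- Consider a maximal forward solution of the shooting system with admissible initial data and suppose r₀ ≥ 1. Then either (r₀, w₀, U₀) = (1, 0, 0) and the solution is trivial with r ≡ 1 and w ≡ 0, or N(ρ) > 0 for every ρ > 0 in the domain such that |w(s)| ≤ 1 holds for all 0 ≤ s ≤ ρ. -/

import Mathlib

open Filter Topology Set Real

noncomputable section

/-- The initial energy `E₀ = 1 + 2U₀² − (1 − w₀²)²/r₀²`. -/
def initialEnergy (r₀ w₀ U₀ : ℝ) : ℝ := 1 + 2 * U₀ ^ 2 - (1 - w₀ ^ 2) ^ 2 / r₀ ^ 2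

/-- Admissible initial data `(r₀, w₀, U₀)`: `r₀ > 0`, `|w₀| ≤ 1`, `E₀ ≥ 0`. -/
def Admissible (r₀ w₀ U₀ : ℝ) : Prop :=
  0 < r₀ ∧ |w₀| ≤ 1 ∧ 0 ≤ initialEnergy r₀ w₀ U₀

/-- The forward domain `[0, ρmax) ⊆ ℝ`, for `ρmax ∈ (0, ∞]`. -/
def fwdDom (ρmax : EReal) : Set ℝ := {ρ : ℝ | 0 ≤ ρ ∧ (ρ : EReal) < ρmax}

/-- `(r, N, w, U, κ, ζ)` solves the shooting system on `[0, ρmax)` with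
initial data `(r₀, w₀, U₀)` (and `N(0) = κ(0) = 0`, `ζ(0) = √E₀`),
together with the constraint. -/
structure IsShootingSolOn (r₀ w₀ U₀ : ℝ) (ρmax : EReal)
    (r N w U κ ζ : ℝ → ℝ) : Prop where
  init_r : r 0 = r₀
  init_N : N 0 = 0
  init_w : w 0 = w₀
  init_U : U 0 = U₀
  init_κ : κ 0 = 0
  init_ζ : ζ 0 = Real.sqrt (initialEnergy r₀ w₀ U₀)
  r_pos : ∀ ρ ∈ fwdDom ρmax, 0 < r ρ
  ode_r : ∀ ρ ∈ fwdDom ρmax, HasDerivWithinAt r (r ρ * N ρ) (fwdDom ρmax) ρ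
  ode_N : ∀ ρ ∈ fwdDom ρmax,
      HasDerivWithinAt N (1 - (1 - w ρ ^ 2) ^ 2 / r ρ ^ 2 - κ ρ * N ρ) (fwdDom ρmax) ρ
  ode_w : ∀ ρ ∈ fwdDom ρmax, HasDerivWithinAt w (r ρ * U ρ) (fwdDom ρmax) ρ
  ode_U : ∀ ρ ∈ fwdDom ρmax,
      HasDerivWithinAt U (-(κ ρ - N ρ) * U ρ - w ρ * (1 - w ρ ^ 2) / r ρ) (fwdDom ρmax) ρ
  ode_κ : ∀ ρ ∈ fwdDom ρmax, HasDerivWithinAt κ (1 + 2 * U ρ ^ 2 - κ ρ ^ 2) (fwdDom ρmax) ρ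
  ode_ζ : ∀ ρ ∈ fwdDom ρmax, HasDerivWithinAt ζ (-(κ ρ) * ζ ρ) (fwdDom ρmax) ρ
  constraint : ∀ ρ ∈ fwdDom ρmax,
      ζ ρ ^ 2 = 1 + 2 * U ρ ^ 2 - (1 - w ρ ^ 2) ^ 2 / r ρ ^ 2 - 2 * κ ρ * N ρ + N ρ ^ 2

/-- A maximal forward solution: a solution on `[0, ρmax)` such that no solution with the
same initial data exists on a strictly larger forward interval. -/
def IsMaximalShootingSol (r₀ w₀ U₀ : ℝ) (ρmax : EReal)
    (r N w U κ ζ : ℝ → ℝ) : Prop :=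
  0 < ρmax ∧ IsShootingSolOn r₀ w₀ U₀ ρmax r N w U κ ζ ∧
    ∀ ρmax' : EReal, ρmax < ρmax' →
      ¬ ∃ r' N' w' U' κ' ζ' : ℝ → ℝ, IsShootingSolOn r₀ w₀ U₀ ρmax' r' N' w' U' κ' ζ'

/-- The set of zeros of `w` in `(0, ρmax)`. -/
def zerosOf (w : ℝ → ℝ) (ρmax : EReal) : Set ℝ :=
  {ρ : ℝ | 0 < ρ ∧ (ρ : EReal) < ρmax ∧ w ρ = 0}

/-- Singular orbit: the solution exists only up to a finite point `ρm`, at which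
`r → 0`, `N → −∞`, while `w, U, κ, ζ` remain bounded. -/
def SingularSol (ρmax : EReal) (r N w U κ ζ : ℝ → ℝ) : Prop :=
  ∃ ρm : ℝ, ρmax = (ρm : EReal) ∧ 0 < ρm ∧
    Tendsto r (𝓝[<] ρm) (𝓝 0) ∧ Tendsto N (𝓝[<] ρm) atBot ∧
    ∃ C : ℝ, ∀ ρ ∈ fwdDom ρmax, |w ρ| ≤ C ∧ |U ρ| ≤ C ∧ |κ ρ| ≤ C ∧ |ζ ρ| ≤ C

/-- Escaping singular orbit: singular, `w` leaves the strip `|w| ≤ 1`, and `w` has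
exactly `n` zeros for `ρ > 0`. -/
def EscapingSol (n : ℕ) (ρmax : EReal) (r N w U κ ζ : ℝ → ℝ) : Prop :=
  SingularSol ρmax r N w U κ ζ ∧ (∃ ρ ∈ fwdDom ρmax, 1 < |w ρ|) ∧
    (zerosOf w ρmax).Finite ∧ (zerosOf w ρmax).ncard = n

/-- Crashing singular orbit: singular with `|w| ≤ 1` on the whole domain. -/
def CrashingSol (ρmax : EReal) (r N w U κ ζ : ℝ → ℝ) : Prop :=
  SingularSol ρmax r N w U κ ζ ∧ ∀ ρ ∈ fwdDom ρmax, |w ρ| ≤ 1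

/-- Oscillatory orbit: global, with `(w, w') = (w, rU) → (0, 0)` as `ρ → ∞`. -/
def OscillatorySol (ρmax : EReal) (r N w U κ ζ : ℝ → ℝ) : Prop :=
  ρmax = ⊤ ∧ Tendsto w atTop (𝓝 0) ∧ Tendsto (fun ρ => r ρ * U ρ) atTop (𝓝 0)

/-- Regular orbit: global, with `(|w|, w') → (1, 0)` as `ρ → ∞`, and `w` has exactly
`n` zeros for `ρ > 0`. -/
def RegularSol (n : ℕ) (ρmax : EReal) (r N w U κ ζ : ℝ → ℝ) : Prop :=
  ρmax = ⊤ ∧ Tendsto (fun ρ => |w ρ|) atTop (𝓝 1) ∧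
    Tendsto (fun ρ => r ρ * U ρ) atTop (𝓝 0) ∧
    (zerosOf w ρmax).Finite ∧ (zerosOf w ρmax).ncard = n

/-- Initial data whose (unique) maximal orbit is escaping singular with `n` zeros of `w`. -/
def InE (n : ℕ) (r₀ w₀ U₀ : ℝ) : Prop :=
  Admissible r₀ w₀ U₀ ∧ ∃ (ρmax : EReal) (r N w U κ ζ : ℝ → ℝ),
    IsMaximalShootingSol r₀ w₀ U₀ ρmax r N w U κ ζ ∧ EscapingSol n ρmax r N w U κ ζ

/-- Initial data whose maximal orbit is crashing singular. -/
def InC (r₀ w₀ U₀ : ℝ) : Prop :=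
  Admissible r₀ w₀ U₀ ∧ ∃ (ρmax : EReal) (r N w U κ ζ : ℝ → ℝ),
    IsMaximalShootingSol r₀ w₀ U₀ ρmax r N w U κ ζ ∧ CrashingSol ρmax r N w U κ ζ

/-- Initial data whose maximal orbit is oscillatory. -/
def InO (r₀ w₀ U₀ : ℝ) : Prop :=
  Admissible r₀ w₀ U₀ ∧ ∃ (ρmax : EReal) (r N w U κ ζ : ℝ → ℝ),
    IsMaximalShootingSol r₀ w₀ U₀ ρmax r N w U κ ζ ∧ OscillatorySol ρmax r N w U κ ζ

/-- Initial data whose maximal orbit is regular with `n` zeros of `w`. -/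
def InR (n : ℕ) (r₀ w₀ U₀ : ℝ) : Prop :=
  Admissible r₀ w₀ U₀ ∧ ∃ (ρmax : EReal) (r N w U κ ζ : ℝ → ℝ),
    IsMaximalShootingSol r₀ w₀ U₀ ρmax r N w U κ ζ ∧ RegularSol n ρmax r N w U κ ζ




lemma monoOn_aux {f f' : ℝ → ℝ} {a b : ℝ}
    (hc : ContinuousOn f (Icc a b))
    (hd : ∀ x ∈ Ioo a b, HasDerivAt f (f' x) x)
    (h0 : ∀ x ∈ Ioo a b, 0 ≤ f' x) : MonotoneOn f (Icc a b) := by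
  apply monotoneOn_of_deriv_nonneg (convex_Icc a b) hc
  · rw [interior_Icc]; exact fun x hx => (hd x hx).differentiableAt.differentiableWithinAt
  · rw [interior_Icc]; intro x hx; rw [(hd x hx).deriv]; exact h0 x hx

lemma constOn_aux {f : ℝ → ℝ} {a b : ℝ}
    (hc : ContinuousOn f (Icc a b))
    (hd : ∀ x ∈ Ioo a b, HasDerivAt f 0 x) :
    ∀ x ∈ Icc a b, f x = f a := by
  intro x hx
  have hab : a ≤ b := hx.1.trans hx.2
  have h1 := monoOn_aux (f' := fun _ => 0) hc hd (fun _ _ => le_refl 0)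
  have h2 : MonotoneOn (fun t => -f t) (Icc a b) := by
    refine monoOn_aux (f' := fun _ => 0) hc.neg (fun x hx => ?_) (fun _ _ => le_refl 0)
    have h := (hd x hx).neg; rw [neg_zero] at h; exact h
  have ha : a ∈ Icc a b := ⟨le_refl a, hab⟩
  have := h2 ha hx hx.1
  have := h1 ha hx hx.1
  simp only at *
  linarith

lemma posOn_right {f : ℝ → ℝ} {d ρ : ℝ} (hρ : 0 < ρ)
    (hf : HasDerivWithinAt f d (Icc 0 ρ) 0) (hd : 0 < d) (hf0 : f 0 = 0) :
    ∃ ε, 0 < ε ∧ ε ≤ ρ ∧ ∀ t, 0 < t → t ≤ ε → 0 < f t := by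
  rw [hasDerivWithinAt_iff_tendsto_slope] at hf
  have h1 : ∀ᶠ t in 𝓝[Icc 0 ρ \ {0}] 0, 0 < slope f 0 t := hf (Ioi_mem_nhds hd)
  rw [eventually_nhdsWithin_iff] at h1
  rcases Metric.eventually_nhds_iff.mp h1 with ⟨δ, hδ, hδ'⟩
  refine ⟨min (δ/2) ρ, by positivity, min_le_right _ _, ?_⟩
  intro t ht htε
  have h2 : t ∈ Icc 0 ρ \ {0} :=
    ⟨⟨ht.le, htε.trans (min_le_right _ _)⟩, by simp [ht.ne']⟩
  have h3 : dist t 0 < δ := by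
    rw [Real.dist_eq, sub_zero, abs_of_pos ht]
    calc t ≤ min (δ/2) ρ := htε
    _ ≤ δ/2 := min_le_left _ _
    _ < δ := by linarith
  have h4 := hδ' h3 h2
  rw [slope_def_field, hf0, sub_zero, sub_zero] at h4
  have h5 := mul_pos h4 ht
  rwa [div_mul_cancel₀ _ ht.ne'] at h5

lemma nonneg_right_endpoint {f : ℝ → ℝ} {σ : ℝ} (hσ : 0 < σ)
    (hf : ContinuousWithinAt f (Ico 0 σ) σ)
    (h : ∀ t ∈ Ico 0 σ, 0 ≤ f t) : 0 ≤ f σ := by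
  have h1 : σ ∈ closure (Ico 0 σ) := by
    rw [closure_Ico hσ.ne]; exact ⟨hσ.le, le_refl σ⟩
  haveI := mem_closure_iff_nhdsWithin_neBot.mp h1
  exact ge_of_tendsto hf (eventually_nhdsWithin_of_forall h)

lemma zero_left_endpoint {f : ℝ → ℝ} {σ : ℝ} (hσ : 0 < σ)
    (hf : ContinuousWithinAt f (Ioo 0 σ) 0)
    (h : ∀ t ∈ Ioo 0 σ, f t = 0) : f 0 = 0 := by
  have h1 : (0:ℝ) ∈ closure (Ioo 0 σ) := by
    rw [closure_Ioo hσ.ne]; exact ⟨le_refl 0, hσ.le⟩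
  haveI := mem_closure_iff_nhdsWithin_neBot.mp h1
  have h2 : Tendsto f (𝓝[Ioo 0 σ] 0) (𝓝 0) := by
    refine Tendsto.congr' ?_ tendsto_const_nhds
    exact (eventually_nhdsWithin_of_forall h).mono fun x hx => hx.symm
  exact tendsto_nhds_unique hf h2

lemma pos_nearby {f : ℝ → ℝ} {s : Set ℝ} {x : ℝ} (hf : ContinuousWithinAt f s x) (hx : 0 < f x) :
    ∃ δ, 0 < δ ∧ ∀ t ∈ s, |t - x| < δ → 0 < f t := by
  have h1 : ∀ᶠ t in 𝓝[s] x, 0 < f t := hf (Ioi_mem_nhds hx)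
  rw [eventually_nhdsWithin_iff] at h1
  rcases Metric.eventually_nhds_iff.mp h1 with ⟨δ, hδ, h⟩
  exact ⟨δ, hδ, fun t hts htd => h (by rwa [Real.dist_eq]) hts⟩

lemma prod_bound {x y z M : ℝ} (hz : |z| ≤ M) : |2 * x * (z * y)| ≤ M * (x^2 + y^2) := by
  have h0 : 0 ≤ M := (abs_nonneg z).trans hz
  have h1 : |2 * x * (z * y)| = 2 * |x| * |y| * |z| := by
    rw [abs_mul, abs_mul, abs_mul, abs_two]; ring
  rw [h1]
  nlinarith [two_mul_le_add_sq |x| |y|, sq_abs x, sq_abs y, abs_nonneg x, abs_nonneg y,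
    mul_nonneg (abs_nonneg x) (abs_nonneg y)]

lemma subset_fwd {ρmax : EReal} {ρ : ℝ} (hρ : ρ ∈ fwdDom ρmax) :
    Icc (0:ℝ) ρ ⊆ fwdDom ρmax := fun t ht =>
  ⟨ht.1, lt_of_le_of_lt (EReal.coe_le_coe_iff.2 ht.2) hρ.2⟩

lemma fwd_mem_nhds {ρmax : EReal} {ρ : ℝ} (hρ : ρ ∈ fwdDom ρmax) {x : ℝ} (hx : x ∈ Ioo 0 ρ) :
    fwdDom ρmax ∈ 𝓝 x :=
  mem_of_superset (isOpen_Ioo.mem_nhds hx) (Ioo_subset_Icc_self.trans (subset_fwd hρ))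

lemma fwd_mem_nhdsWithin_Ici {ρmax : EReal} {ρ : ℝ} (hρ : ρ ∈ fwdDom ρmax) {x : ℝ}
    (hx : x ∈ Ico 0 ρ) : fwdDom ρmax ∈ 𝓝[Ici x] x :=
  mem_nhdsWithin.2 ⟨Iio ρ, isOpen_Iio, hx.2, fun y hy => subset_fwd hρ ⟨hx.1.trans hy.2, hy.1.le⟩⟩

lemma aux_pos {r₀ w₀ U₀ : ℝ} {ρmax : EReal} {r N w U κ ζ : ℝ → ℝ}
    (hS : IsShootingSolOn r₀ w₀ U₀ ρmax r N w U κ ζ)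
    (hr₀ : 1 ≤ r₀) (hdata : ¬(r₀ = 1 ∧ w₀ = 0 ∧ U₀ = 0))
    {ρ : ℝ} (hρ : ρ ∈ fwdDom ρmax) (hρ0 : 0 < ρ)
    (hwb : ∀ s : ℝ, 0 ≤ s → s ≤ ρ → |w s| ≤ 1) : 0 < N ρ := by
  have hsub := subset_fwd hρ
  have hrI : ∀ s ∈ Icc (0:ℝ) ρ, HasDerivWithinAt r (r s * N s) (Icc 0 ρ) s :=
    fun s hs => (hS.ode_r s (hsub hs)).mono hsub
  have hNI : ∀ s ∈ Icc (0:ℝ) ρ,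
      HasDerivWithinAt N (1 - (1 - w s ^ 2) ^ 2 / r s ^ 2 - κ s * N s) (Icc 0 ρ) s :=
    fun s hs => (hS.ode_N s (hsub hs)).mono hsub
  have hwI : ∀ s ∈ Icc (0:ℝ) ρ, HasDerivWithinAt w (r s * U s) (Icc 0 ρ) s :=
    fun s hs => (hS.ode_w s (hsub hs)).mono hsub
  have hUI : ∀ s ∈ Icc (0:ℝ) ρ,
      HasDerivWithinAt U (-(κ s - N s) * U s - w s * (1 - w s ^ 2) / r s) (Icc 0 ρ) s :=
    fun s hs => (hS.ode_U s (hsub hs)).mono hsub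
  have hrA : ∀ s ∈ Ioo (0:ℝ) ρ, HasDerivAt r (r s * N s) s :=
    fun s hs => (hS.ode_r s (hsub (Ioo_subset_Icc_self hs))).hasDerivAt (fwd_mem_nhds hρ hs)
  have hNA : ∀ s ∈ Ioo (0:ℝ) ρ,
      HasDerivAt N (1 - (1 - w s ^ 2) ^ 2 / r s ^ 2 - κ s * N s) s :=
    fun s hs => (hS.ode_N s (hsub (Ioo_subset_Icc_self hs))).hasDerivAt (fwd_mem_nhds hρ hs)
  have hwA : ∀ s ∈ Ioo (0:ℝ) ρ, HasDerivAt w (r s * U s) s :=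
    fun s hs => (hS.ode_w s (hsub (Ioo_subset_Icc_self hs))).hasDerivAt (fwd_mem_nhds hρ hs)
  have hrc : ContinuousOn r (Icc 0 ρ) := fun s hs => (hrI s hs).continuousWithinAt
  have hNc : ContinuousOn N (Icc 0 ρ) := fun s hs => (hNI s hs).continuousWithinAt
  have hwc : ContinuousOn w (Icc 0 ρ) := fun s hs => (hwI s hs).continuousWithinAt
  have hUc : ContinuousOn U (Icc 0 ρ) := fun s hs => (hUI s hs).continuousWithinAt
  have hκc : ContinuousOn κ (Icc 0 ρ) := fun s hs =>
    ((hS.ode_κ s (hsub hs)).mono hsub).continuousWithinAt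
  have hrpos : ∀ s ∈ Icc (0:ℝ) ρ, 0 < r s := fun s hs => hS.r_pos s (hsub hs)
  -- integrating factor
  set g : ℝ → ℝ := fun t => κ (max 0 (min t ρ)) with hg
  have hclamp : ∀ t : ℝ, max 0 (min t ρ) ∈ Icc (0:ℝ) ρ := fun t =>
    ⟨le_max_left _ _, max_le hρ0.le (min_le_right _ _)⟩
  have hgcont : Continuous g := by
    apply hκc.comp_continuous
    · exact continuous_const.max (continuous_id.min continuous_const)
    · exact hclamp
  have hgk : ∀ s ∈ Icc (0:ℝ) ρ, g s = κ s := by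
    intro s hs
    simp only [hg]
    rw [min_eq_left hs.2, max_eq_right hs.1]
  set Φ : ℝ → ℝ := fun x => ∫ t in (0:ℝ)..x, g t with hΦdef
  have hΦ : ∀ x : ℝ, HasDerivAt Φ (g x) x := fun x =>
    (hgcont.integral_hasStrictDerivAt 0 x).hasDerivAt
  have hΦcont : Continuous Φ :=
    continuous_iff_continuousAt.2 fun x => (hΦ x).continuousAt
  set G : ℝ → ℝ := fun s => Real.exp (Φ s) * N s with hGdef
  have hGc : ContinuousOn G (Icc 0 ρ) :=
    ((Real.continuous_exp.comp hΦcont).continuousOn).mul hNc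
  have hGA : ∀ s ∈ Ioo (0:ℝ) ρ,
      HasDerivAt G (Real.exp (Φ s) * (1 - (1 - w s ^ 2) ^ 2 / r s ^ 2)) s := by
    intro s hs
    have h1 := ((hΦ s).exp).mul (hNA s hs)
    refine h1.congr_deriv ?_
    rw [hgk s (Ioo_subset_Icc_self hs)]; ring
  set A : ℝ → ℝ := fun s => r s ^ 2 - (1 - w s ^ 2) ^ 2 with hAdef
  have hAc : ContinuousOn A (Icc 0 ρ) :=
    (hrc.pow 2).sub ((continuousOn_const.sub (hwc.pow 2)).pow 2)
  set q : ℝ → ℝ := fun s => 2 * r s ^ 2 * N s + 4 * r s * w s * U s * (1 - w s ^ 2) with hqdef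
  have hAA : ∀ s ∈ Ioo (0:ℝ) ρ, HasDerivAt A (q s) s := by
    intro s hs
    have h1 := ((hrA s hs).pow 2).sub ((((hwA s hs).pow 2).const_sub 1).pow 2)
    refine h1.congr_deriv ?_
    simp only [hqdef]
    push_cast; simp only [Pi.pow_apply]; ring
  have hA_c : ∀ s ∈ Icc (0:ℝ) ρ, 0 ≤ A s → 0 ≤ 1 - (1 - w s ^ 2) ^ 2 / r s ^ 2 := by
    intro s hs hA
    rw [sub_nonneg, div_le_one (pow_pos (hrpos s hs) 2)]
    simp only [hAdef] at hA
    linarith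
  have hGmono : ∀ σ, 0 < σ → σ ≤ ρ → (∀ t ∈ Icc (0:ℝ) σ, 0 ≤ A t) →
      MonotoneOn G (Icc 0 σ) := by
    intro σ hσ0 hσρ hA
    refine monoOn_aux (f' := fun s => Real.exp (Φ s) * (1 - (1 - w s ^ 2) ^ 2 / r s ^ 2))
      (hGc.mono (Icc_subset_Icc_right hσρ))
      (fun x hx => hGA x ⟨hx.1, lt_of_lt_of_le hx.2 hσρ⟩) ?_
    intro x hx
    have hx' : x ∈ Icc (0:ℝ) ρ := ⟨hx.1.le, hx.2.le.trans hσρ⟩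
    exact mul_nonneg (Real.exp_pos _).le (hA_c x hx' (hA x (Ioo_subset_Icc_self hx)))
  have hG0 : G 0 = 0 := by simp [hGdef, hS.init_N]
  have hNsign : ∀ σ, 0 < σ → σ ≤ ρ → (∀ t ∈ Icc (0:ℝ) σ, 0 ≤ A t) →
      ∀ t ∈ Icc (0:ℝ) σ, 0 ≤ N t := by
    intro σ hσ0 hσρ hA t ht
    have h1 := hGmono σ hσ0 hσρ hA ⟨le_refl 0, hσ0.le⟩ ht ht.1
    rw [hG0] at h1
    have h2 : (0:ℝ) < Real.exp (Φ t) := Real.exp_pos _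
    by_contra hneg
    push_neg at hneg
    have h3 := mul_neg_of_pos_of_neg h2 hneg
    simp only [hGdef] at h1
    linarith
  have hwsq : ∀ s, 0 ≤ s → s ≤ ρ → w s ^ 2 ≤ 1 := by
    intro s h1 h2
    have h3 := hwb s h1 h2
    nlinarith [sq_abs (w s), abs_nonneg (w s)]
  have htouch : ∀ σ, 0 < σ → σ ≤ ρ →
      (∀ t ∈ Icc (0:ℝ) σ, 0 ≤ N t ∧ 0 ≤ A t) → N σ = 0 → False := by
    intro σ hσ0 hσρ hinv hNσ
    have hsub2 : Icc (0:ℝ) σ ⊆ Icc (0:ℝ) ρ := Icc_subset_Icc_right hσρ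
    have hsubo : Ioo (0:ℝ) σ ⊆ Ioo (0:ℝ) ρ := fun x hx => ⟨hx.1, lt_of_lt_of_le hx.2 hσρ⟩
    have hmono := hGmono σ hσ0 hσρ (fun t ht => (hinv t ht).2)
    have hGσ : G σ = 0 := by simp [hGdef, hNσ]
    have hNzero : ∀ t ∈ Icc (0:ℝ) σ, N t = 0 := by
      intro t ht
      have h1 : G t ≤ G σ := hmono ht ⟨hσ0.le, le_refl σ⟩ ht.2
      have h2 : G 0 ≤ G t := hmono ⟨le_refl 0, hσ0.le⟩ ht ht.1
      rw [hG0] at h2; rw [hGσ] at h1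
      have h3 : G t = 0 := le_antisymm h1 h2
      simp only [hGdef] at h3
      rcases mul_eq_zero.mp h3 with h | h
      · exact absurd h (Real.exp_ne_zero _)
      · exact h
    have hczero : ∀ s ∈ Ioo (0:ℝ) σ, (1 - w s ^ 2) ^ 2 = r s ^ 2 := by
      intro s hs
      have hNloc : N =ᶠ[𝓝 s] fun _ => 0 := by
        filter_upwards [isOpen_Ioo.mem_nhds hs] with t ht
        exact hNzero t (Ioo_subset_Icc_self ht)
      have h1 : HasDerivAt N 0 s :=
        (hasDerivAt_const s (0:ℝ)).congr_of_eventuallyEq hNloc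
      have h2 := (hNA s (hsubo hs)).unique h1
      rw [hNzero s (Ioo_subset_Icc_self hs), mul_zero, sub_zero, sub_eq_zero] at h2
      have hrn : r s ^ 2 ≠ 0 := ne_of_gt (pow_pos (hrpos s (hsub2 (Ioo_subset_Icc_self hs))) 2)
      rw [eq_comm, div_eq_one_iff_eq hrn] at h2
      exact h2
    have hrconst : ∀ t ∈ Icc (0:ℝ) σ, r t = r 0 := by
      refine constOn_aux (hrc.mono hsub2) ?_
      intro x hx
      have h1 := hrA x (hsubo hx)
      rwa [hNzero x (Ioo_subset_Icc_self hx), mul_zero] at h1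
    have hshalf : σ/2 ∈ Ioo (0:ℝ) σ := ⟨by linarith, by linarith⟩
    have hr₀1 : r₀ = 1 := by
      have h1 := hczero _ hshalf
      have h2 := hrconst _ (Ioo_subset_Icc_self hshalf)
      have h3 := hwsq (σ/2) (by linarith) (by linarith)
      rw [h2, hS.init_r] at h1
      have h4 : r₀ ≤ 1 := by nlinarith [sq_nonneg (w (σ/2)), sq_nonneg (1 - w (σ/2) ^ 2)]
      exact le_antisymm h4 hr₀
    have hwzero : ∀ s ∈ Ioo (0:ℝ) σ, w s = 0 := by
      intro s hs
      have h1 := hczero s hs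
      rw [hrconst s (Ioo_subset_Icc_self hs), hS.init_r, hr₀1] at h1
      have h3 := hwsq s hs.1.le (hs.2.le.trans hσρ)
      have h4 : w s ^ 2 ≤ 0 := by nlinarith [sq_nonneg (w s)]
      have h5 : w s ^ 2 = 0 := le_antisymm h4 (sq_nonneg _)
      exact (pow_eq_zero_iff two_ne_zero).mp h5
    have hUzero : ∀ s ∈ Ioo (0:ℝ) σ, U s = 0 := by
      intro s hs
      have hwloc : w =ᶠ[𝓝 s] fun _ => 0 := by
        filter_upwards [isOpen_Ioo.mem_nhds hs] with t ht
        exact hwzero t ht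
      have h1 : HasDerivAt w 0 s :=
        (hasDerivAt_const s (0:ℝ)).congr_of_eventuallyEq hwloc
      have h2 := (hwA s (hsubo hs)).unique h1
      rcases mul_eq_zero.mp h2 with h | h
      · exact absurd h (ne_of_gt (hrpos s (hsub2 (Ioo_subset_Icc_self hs))))
      · exact h
    have hw₀ : w₀ = 0 := by
      rw [← hS.init_w]
      exact zero_left_endpoint hσ0
        ((hwc 0 ⟨le_refl 0, hρ0.le⟩).mono (fun x hx => hsub2 (Ioo_subset_Icc_self hx))) hwzero
    have hU₀ : U₀ = 0 := by
      rw [← hS.init_U]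
      exact zero_left_endpoint hσ0
        ((hUc 0 ⟨le_refl 0, hρ0.le⟩).mono (fun x hx => hsub2 (Ioo_subset_Icc_self hx))) hUzero
    exact hdata ⟨hr₀1, hw₀, hU₀⟩
  -- the invariant set
  have hA0 : 0 ≤ A 0 := by
    have hw0 : w 0 ^ 2 ≤ 1 := hwsq 0 le_rfl hρ0.le
    have hr00 : 1 ≤ r 0 := by rw [hS.init_r]; exact hr₀
    simp only [hAdef]
    nlinarith
  set S : Set ℝ := {s | s ∈ Icc (0:ℝ) ρ ∧ ∀ t ∈ Icc (0:ℝ) s, 0 ≤ N t ∧ 0 ≤ A t} with hSdef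
  have h0S : (0:ℝ) ∈ S := by
    refine ⟨⟨le_refl 0, hρ0.le⟩, ?_⟩
    intro t ht
    have ht0 : t = 0 := le_antisymm ht.2 ht.1
    subst ht0
    exact ⟨hS.init_N.ge, hA0⟩
  have hSbdd : BddAbove S := ⟨ρ, fun s hs => hs.1.2⟩
  set σ := sSup S with hσdef
  have hσmem : σ ∈ Icc (0:ℝ) ρ :=
    ⟨le_csSup hSbdd h0S, csSup_le ⟨0, h0S⟩ (fun s hs => hs.1.2)⟩
  have hσinv : ∀ t ∈ Icc (0:ℝ) σ, 0 ≤ N t ∧ 0 ≤ A t := by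
    intro t ht
    rcases lt_or_eq_of_le ht.2 with h | h
    · rcases exists_lt_of_lt_csSup ⟨0, h0S⟩ h with ⟨s, hsS, hts⟩
      exact hsS.2 t ⟨ht.1, hts.le⟩
    · subst h
      rcases eq_or_lt_of_le ht.1 with h0 | h0
      · rw [← h0]; exact ⟨hS.init_N.ge, hA0⟩
      have hIcoN : ∀ u ∈ Ico (0:ℝ) σ, 0 ≤ N u ∧ 0 ≤ A u := by
        intro u hu
        rcases exists_lt_of_lt_csSup ⟨0, h0S⟩ hu.2 with ⟨s, hsS, hus⟩
        exact hsS.2 u ⟨hu.1, hus.le⟩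
      have hIsub : Ico (0:ℝ) σ ⊆ Icc (0:ℝ) ρ := fun x hx => ⟨hx.1, hx.2.le.trans hσmem.2⟩
      constructor
      · exact nonneg_right_endpoint h0 ((hNc σ hσmem).mono hIsub)
          (fun u hu => (hIcoN u hu).1)
      · exact nonneg_right_endpoint h0 ((hAc σ hσmem).mono hIsub)
          (fun u hu => (hIcoN u hu).2)
  have hext : ∀ ε, 0 < ε → σ + ε ≤ ρ →
      (∀ t ∈ Icc (0:ℝ) (σ + ε), 0 ≤ N t ∧ 0 ≤ A t) → False := by
    intro ε hε hle hinv
    have hmem : σ + ε ∈ S := ⟨⟨by linarith [hσmem.1], hle⟩, hinv⟩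
    have := le_csSup hSbdd hmem
    linarith
  have hσρ : σ = ρ := by
    by_contra hne
    have hσlt : σ < ρ := lt_of_le_of_ne hσmem.2 hne
    rcases (hσinv σ ⟨hσmem.1, le_refl σ⟩).1.lt_or_eq with hNσ | hNσ
    · -- 0 < N σ : extend by continuity + monotonicity of r
      obtain ⟨δ, hδ0, hδ⟩ := pos_nearby (hNc σ hσmem) hNσ
      set ε := min (δ/2) (ρ - σ) with hεdef
      have hε0 : 0 < ε := lt_min (by linarith) (by linarith)
      have hle : σ + ε ≤ ρ := by
        have := min_le_right (δ/2) (ρ - σ)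
        simp only [hεdef] at *
        linarith
      have hNnn : ∀ t ∈ Icc (0:ℝ) (σ + ε), 0 ≤ N t := by
        intro t ht
        rcases le_or_gt t σ with h | h
        · exact (hσinv t ⟨ht.1, h⟩).1
        · refine (hδ t ⟨ht.1, ht.2.trans hle⟩ ?_).le
          rw [abs_of_pos (by linarith)]
          have h3 : ε ≤ δ/2 := min_le_left _ _
          have h4 : t - σ ≤ ε := by linarith [ht.2]
          linarith
      have hrmono : MonotoneOn r (Icc 0 (σ + ε)) := by
        refine monoOn_aux (f' := fun x => r x * N x) (hrc.mono (Icc_subset_Icc_right hle))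
          (fun x hx => hrA x ⟨hx.1, lt_of_lt_of_le hx.2 hle⟩) ?_
        intro x hx
        exact mul_nonneg (hrpos x ⟨hx.1.le, hx.2.le.trans hle⟩).le
          (hNnn x (Ioo_subset_Icc_self hx))
      have hσε0 : (0:ℝ) ≤ σ + ε := by linarith [hσmem.1]
      refine hext ε hε0 hle ?_
      intro t ht
      refine ⟨hNnn t ht, ?_⟩
      have h1 : r 0 ≤ r t := hrmono ⟨le_refl 0, hσε0⟩ ht ht.1
      rw [hS.init_r] at h1
      have h2 : w t ^ 2 ≤ 1 := hwsq t ht.1 (ht.2.trans hle)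
      simp only [hAdef]
      nlinarith
    · rcases eq_or_lt_of_le hσmem.1 with hσ0 | hσ0
      · -- σ = 0
        rcases hA0.lt_or_eq with hA0p | hA0e
        · -- 0 < A 0 : extend by continuity of A
          obtain ⟨δ, hδ0, hδ⟩ := pos_nearby (hAc 0 ⟨le_refl 0, hρ0.le⟩) hA0p
          set ε := min (δ/2) ρ with hεdef
          have hε0 : 0 < ε := lt_min (by linarith) hρ0
          have hερ : ε ≤ ρ := min_le_right _ _
          have hAnn : ∀ t ∈ Icc (0:ℝ) ε, 0 ≤ A t := by
            intro t ht
            refine (hδ t ⟨ht.1, ht.2.trans hερ⟩ ?_).le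
            rw [sub_zero, abs_of_nonneg ht.1]
            have := min_le_left (δ/2) ρ
            linarith [ht.2]
          have hNnn := hNsign ε hε0 hερ hAnn
          refine hext ε hε0 ?_ ?_
          · rw [← hσ0, zero_add]; exact hερ
          · intro t ht
            rw [← hσ0, zero_add] at ht
            exact ⟨hNnn t ht, hAnn t ht⟩
        · -- A 0 = 0 : r₀ = 1, w₀ = 0, use second-order push from U₀ ≠ 0
          have hw0sq : w 0 ^ 2 ≤ 1 := hwsq 0 le_rfl hρ0.le
          have hr00 : 1 ≤ r 0 := by rw [hS.init_r]; exact hr₀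
          have hA0e' : r 0 ^ 2 = (1 - w 0 ^ 2) ^ 2 := by
            simp only [hAdef] at hA0e
            linarith
          have hr01 : r₀ = 1 := by
            have h4 : r 0 ≤ 1 := by
              nlinarith [sq_nonneg (w 0), sq_nonneg (1 - w 0 ^ 2)]
            rw [← hS.init_r]
            exact le_antisymm h4 hr00
          have hw01 : w₀ = 0 := by
            rw [← hS.init_w]
            have hre : r 0 = 1 := by rw [hS.init_r]; exact hr01
            rw [hre] at hA0e'
            have h4 : w 0 ^ 2 ≤ 0 := by nlinarith [sq_nonneg (w 0)]
            have h5 : w 0 ^ 2 = 0 := le_antisymm h4 (sq_nonneg _)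
            exact (pow_eq_zero_iff two_ne_zero).mp h5
          have hU0ne : U₀ ≠ 0 := fun h => hdata ⟨hr01, hw01, h⟩
          have hw00 : w 0 = 0 := by rw [hS.init_w]; exact hw01
          have hr001 : r 0 = 1 := by rw [hS.init_r]; exact hr01
          have hq0 : q 0 = 0 := by
            simp only [hqdef]
            rw [hS.init_N, hw00]
            ring
          have h0m : (0:ℝ) ∈ Icc (0:ℝ) ρ := ⟨le_refl 0, hρ0.le⟩
          have hqd : HasDerivWithinAt q (4 * U₀ ^ 2) (Icc 0 ρ) 0 := by
            have t2 := (((hrI 0 h0m).pow 2).const_mul (2:ℝ)).mul (hNI 0 h0m)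
            have t3 := (((hrI 0 h0m).mul (hwI 0 h0m)).mul (hUI 0 h0m)).mul
              (((hwI 0 h0m).pow 2).const_sub 1)
            have t4 := t3.const_mul (4:ℝ)
            have tb := t2.add t4
            have tb' : HasDerivWithinAt
                (fun s : ℝ => 2 * r s ^ 2 * N s + 4 * r s * w s * U s * (1 - w s ^ 2))
                (4 * U₀ ^ 2) (Icc 0 ρ) 0 := by
              refine (tb.congr (fun x _ => by simp only [Pi.add_apply, Pi.mul_apply, Pi.pow_apply]; ring)
                (by simp only [Pi.add_apply, Pi.mul_apply, Pi.pow_apply]; ring)).congr_deriv ?_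
              simp only [Pi.pow_apply, Pi.mul_apply]
              rw [hS.init_N, hw00, hS.init_U, hS.init_κ, hr001]; norm_num [pow_two]
            exact tb'.congr (fun x _ => by simp only [hqdef]) (by simp only [hqdef])
          obtain ⟨ε, hε0, hερ, hεq⟩ := posOn_right hρ0 hqd
            (by nlinarith [pow_two_pos_of_ne_zero hU0ne]) hq0
          have hAmono : MonotoneOn A (Icc 0 ε) :=
            monoOn_aux (f' := q) (hAc.mono (Icc_subset_Icc_right hερ))
              (fun x hx => hAA x ⟨hx.1, lt_of_lt_of_le hx.2 hερ⟩)
              (fun x hx => (hεq x hx.1 hx.2.le).le)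
          have hAnn : ∀ t ∈ Icc (0:ℝ) ε, 0 ≤ A t := by
            intro t ht
            have := hAmono ⟨le_refl 0, hε0.le⟩ ht ht.1
            linarith [hA0e]
          have hNnn := hNsign ε hε0 hερ hAnn
          refine hext ε hε0 ?_ ?_
          · rw [← hσ0, zero_add]; exact hερ
          · intro t ht
            rw [← hσ0, zero_add] at ht
            exact ⟨hNnn t ht, hAnn t ht⟩
      · exact htouch σ hσ0 hσmem.2 hσinv hNσ.symm
  rw [hσρ] at hσinv
  rcases (hσinv ρ ⟨hρ0.le, le_refl ρ⟩).1.lt_or_eq with h | h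
  · exact h
  · exact absurd h.symm (fun hh => htouch ρ hρ0 (le_refl ρ) hσinv hh)

lemma abs_div_bound {X a m : ℝ} (hm : 0 < m) (ha : m ≤ a) : |X / a| ≤ |X| / m := by
  rw [abs_div, abs_of_pos (lt_of_lt_of_le hm ha)]
  exact div_le_div_of_nonneg_left (abs_nonneg X) hm ha


lemma bndE3 {k b M : ℝ} (hkM : |k| ≤ M) : |(-(2*k*b^2))| ≤ 2*M*b^2 := by
  have h31 : |(-(2*k*b^2))| = 2 * |k| * b^2 := by
    rw [abs_neg, abs_mul, abs_mul, abs_two, abs_of_nonneg (sq_nonneg b)]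
  rw [h31]
  nlinarith [mul_le_mul_of_nonneg_right hkM (sq_nonneg b)]

lemma bndE5 {k b d M : ℝ} (hkM : |k| ≤ M) (hbM : |b| ≤ M) :
    |(-(2*(k-b)*d^2))| ≤ 4*M*d^2 := by
  have h51 : |(-(2*(k-b)*d^2))| = 2 * |k - b| * d^2 := by
    rw [abs_neg, abs_mul, abs_mul, abs_two, abs_of_nonneg (sq_nonneg d)]
  have h52 : |k - b| ≤ 2*M := (abs_sub k b).trans (by linarith)
  rw [h51]
  nlinarith [mul_le_mul_of_nonneg_right h52 (sq_nonneg d), sq_nonneg d]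

lemma bndE6 {a c d m M : ℝ} (hm0 : 0 < m) (hma : m ≤ a) (hcM : |c| ≤ M) :
    |(-(2*d*(c*(1-c^2))/a))| ≤ (1+M^2)/m*(c^2+d^2) := by
  have ha0 : 0 < a := lt_of_lt_of_le hm0 hma
  have h61 : |(-(2*d*(c*(1-c^2))/a))| = |2*d*(c*(1-c^2))| / |a| := by
    rw [abs_neg, abs_div]
  have h62 : |2*d*(c*(1-c^2))| / |a| ≤ |2*d*(c*(1-c^2))| / m := by
    rw [abs_of_pos ha0]
    exact div_le_div_of_nonneg_left (abs_nonneg _) hm0 hma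
  have h63 : |2*d*(c*(1-c^2))| = 2 * |d| * (|c| * |1 - c^2|) := by
    rw [abs_mul, abs_mul, abs_mul, abs_two]
  have hc2 : c^2 ≤ M^2 := by
    nlinarith [mul_self_le_mul_self (abs_nonneg c) hcM, sq_abs c]
  have h64 : |1 - c^2| ≤ 1 + M^2 := by
    rw [abs_le]
    constructor
    · linarith [hc2]
    · linarith [sq_nonneg c, sq_nonneg M]
  have h65 : 2 * |d| * (|c| * |1 - c^2|) ≤ (1+M^2) * (c^2+d^2) := by
    calc 2 * |d| * (|c| * |1 - c^2|) ≤ 2 * |d| * (|c| * (1 + M^2)) := by gcongr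
      _ = (2 * |c| * |d|) * (1 + M^2) := by ring
      _ ≤ (c^2 + d^2) * (1 + M^2) :=
          mul_le_mul_of_nonneg_right
            (by nlinarith [two_mul_le_add_sq (|c|) (|d|), sq_abs c, sq_abs d])
            (by positivity)
      _ = (1+M^2) * (c^2+d^2) := by ring
  calc |(-(2*d*(c*(1-c^2))/a))| = |2*d*(c*(1-c^2))| / |a| := h61
    _ ≤ |2*d*(c*(1-c^2))| / m := h62
    _ = 2 * |d| * (|c| * |1 - c^2|) / m := by rw [h63]
    _ ≤ (1+M^2) * (c^2+d^2) / m := by gcongr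
    _ = (1+M^2)/m*(c^2+d^2) := by ring

lemma bndE2 {a b c m M : ℝ} (hm0 : 0 < m) (hma : m ≤ a)
    (haM : |a| ≤ M) (hbM : |b| ≤ M) (hcM : |c| ≤ M) :
    |2*b*(1 - (1-c^2)^2/a^2)| ≤ (M+1+M^2)/m^2*((b^2+(a-1)^2) + 2*M*c^2) := by
  have ha0 : 0 < a := lt_of_lt_of_le hm0 hma
  have ha00 : a ≠ 0 := ne_of_gt ha0
  have hM0 : 0 ≤ M := (abs_nonneg a).trans haM
  have hQ : 2*b*(1 - (1-c^2)^2/a^2) = 2*b*(((a-1)+c^2)*((a+1)-c^2)) / a^2 := by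
    rw [one_sub_div (pow_ne_zero 2 ha00)]
    ring
  have ha2 : m^2 ≤ a^2 := by nlinarith
  have hm20 : 0 < m^2 := by positivity
  have h21 := abs_div_bound (X := 2*b*(((a-1)+c^2)*((a+1)-c^2))) hm20 ha2
  have h22 : |2*b*(((a-1)+c^2)*((a+1)-c^2))| = 2 * |b| * (|(a-1)+c^2| * |(a+1)-c^2|) := by
    rw [abs_mul, abs_mul, abs_mul, abs_two]
  have hc2 : c^2 ≤ M^2 := by
    nlinarith [mul_self_le_mul_self (abs_nonneg c) hcM, sq_abs c]
  have h23 : |(a+1)-c^2| ≤ M + 1 + M^2 := by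
    rw [abs_le]
    have := abs_le.mp haM
    constructor
    · linarith [hc2, sq_nonneg M]
    · linarith [sq_nonneg c, sq_nonneg M]
  have h24 : |(a-1)+c^2| ≤ |a-1| + c^2 := by
    refine (abs_add_le _ _).trans ?_
    rw [abs_of_nonneg (sq_nonneg c)]
  have h25 : 2 * |b| * (|(a-1)+c^2| * |(a+1)-c^2|) ≤ ((b^2+(a-1)^2) + 2*M*c^2) * (M+1+M^2) := by
    calc 2 * |b| * (|(a-1)+c^2| * |(a+1)-c^2|)
        ≤ 2 * |b| * ((|a-1| + c^2) * (M + 1 + M^2)) := by gcongr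
      _ = (2 * |b| * |a-1| + 2 * |b| * c^2) * (M + 1 + M^2) := by ring
      _ ≤ ((b^2 + (a-1)^2) + 2 * M * c^2) * (M + 1 + M^2) := by
          refine mul_le_mul_of_nonneg_right ?_ (by positivity)
          have g1 : 2 * |b| * |a-1| ≤ b^2 + (a-1)^2 := by
            nlinarith [two_mul_le_add_sq (|b|) (|a-1|), sq_abs b, sq_abs (a-1)]
          have g2 : 2 * |b| * c^2 ≤ 2 * M * c^2 := by
            nlinarith [mul_le_mul_of_nonneg_right hbM (sq_nonneg c)]
          linarith
  calc |2*b*(1 - (1-c^2)^2/a^2)| = |2*b*(((a-1)+c^2)*((a+1)-c^2)) / a^2| := by rw [hQ]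
    _ ≤ |2*b*(((a-1)+c^2)*((a+1)-c^2))| / m^2 := h21
    _ = 2 * |b| * (|(a-1)+c^2| * |(a+1)-c^2|) / m^2 := by rw [h22]
    _ ≤ ((b^2+(a-1)^2) + 2*M*c^2) * (M+1+M^2) / m^2 := by gcongr
    _ = (M+1+M^2)/m^2*((b^2+(a-1)^2) + 2*M*c^2) := by ring

set_option maxHeartbeats 1000000 in
lemma VD_bound {a b c d k M m K : ℝ} (hM1 : 1 ≤ M) (hm0 : 0 < m) (hma : m ≤ a)
    (haM : |a| ≤ M) (hbM : |b| ≤ M) (hcM : |c| ≤ M) (hdM : |d| ≤ M) (hkM : |k| ≤ M)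
    (hK : K = 8*M + (1 + M^2)/m + (M + 1 + M^2)*(1+2*M)/m^2) :
    |2*(a-1)*(a*b) + 2*b*(1 - (1-c^2)^2/a^2) + (-(2*k*b^2))
      + 2*c*(a*d) + (-(2*(k-b)*d^2)) + (-(2*d*(c*(1-c^2))/a))|
      ≤ K * ((a-1)^2 + b^2 + c^2 + d^2) := by
  have hM0 : (0:ℝ) ≤ M := by linarith
  obtain ⟨S, hSdef⟩ : ∃ S : ℝ, S = (a-1)^2 + b^2 + c^2 + d^2 := ⟨_, rfl⟩
  rw [← hSdef]
  obtain ⟨u, hudef⟩ : ∃ u : ℝ, u = (M+1+M^2)/m^2 := ⟨_, rfl⟩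
  obtain ⟨v, hvdef⟩ : ∃ v : ℝ, v = (1+M^2)/m := ⟨_, rfl⟩
  have hu0 : 0 ≤ u := by rw [hudef]; positivity
  have hv0 : 0 ≤ v := by rw [hvdef]; positivity
  have hE1 : |2*(a-1)*(a*b)| ≤ M * ((a-1)^2 + b^2) := prod_bound haM
  have hE4 : |2*c*(a*d)| ≤ M * (c^2 + d^2) := prod_bound haM
  have hE3 := bndE3 (b := b) hkM
  have hE5 := bndE5 (d := d) hkM hbM
  have hE6' := bndE6 (d := d) hm0 hma hcM
  have hE2' := bndE2 hm0 hma haM hbM hcM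
  have hE6 : |(-(2*d*(c*(1-c^2))/a))| ≤ v*(c^2+d^2) := by rw [hvdef]; exact hE6'
  have hE2 : |2*b*(1 - (1-c^2)^2/a^2)| ≤ u*((b^2+(a-1)^2) + 2*M*c^2) := by
    rw [hudef]; exact hE2'
  -- pieces vs S
  have e1 : (a-1)^2 + b^2 ≤ S := by rw [hSdef]; nlinarith [sq_nonneg c, sq_nonneg d]
  have e2 : c^2 + d^2 ≤ S := by rw [hSdef]; nlinarith [sq_nonneg (a-1), sq_nonneg b]
  have e3 : b^2 ≤ S := by rw [hSdef]; nlinarith [sq_nonneg (a-1), sq_nonneg c, sq_nonneg d]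
  have e4 : d^2 ≤ S := by rw [hSdef]; nlinarith [sq_nonneg (a-1), sq_nonneg b, sq_nonneg c]
  have e5 : c^2 ≤ S := by rw [hSdef]; nlinarith [sq_nonneg (a-1), sq_nonneg b, sq_nonneg d]
  have t1 : M * ((a-1)^2 + b^2) ≤ M * S := mul_le_mul_of_nonneg_left e1 hM0
  have t4 : M * (c^2 + d^2) ≤ M * S := mul_le_mul_of_nonneg_left e2 hM0
  have t3 : 2*M*b^2 ≤ 2*M*S := by nlinarith [mul_le_mul_of_nonneg_left e3 hM0]
  have t5 : 4*M*d^2 ≤ 4*M*S := by nlinarith [mul_le_mul_of_nonneg_left e4 hM0]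
  have t6 : v*(c^2+d^2) ≤ v*S := mul_le_mul_of_nonneg_left e2 hv0
  have t2 : u*((b^2+(a-1)^2) + 2*M*c^2) ≤ u*(S + 2*M*S) := by
    refine mul_le_mul_of_nonneg_left ?_ hu0
    have := mul_le_mul_of_nonneg_left e5 (by linarith : (0:ℝ) ≤ 2*M)
    linarith
  have hKS : K * S = M*S + u*(S + 2*M*S) + 2*M*S + M*S + 4*M*S + v*S := by
    rw [hK, hudef, hvdef]; ring
  calc |2*(a-1)*(a*b) + 2*b*(1 - (1-c^2)^2/a^2) + (-(2*k*b^2))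
      + 2*c*(a*d) + (-(2*(k-b)*d^2)) + (-(2*d*(c*(1-c^2))/a))|
      ≤ |2*(a-1)*(a*b) + 2*b*(1 - (1-c^2)^2/a^2) + (-(2*k*b^2))
      + 2*c*(a*d) + (-(2*(k-b)*d^2))| + |(-(2*d*(c*(1-c^2))/a))| := abs_add_le _ _
    _ ≤ |2*(a-1)*(a*b) + 2*b*(1 - (1-c^2)^2/a^2) + (-(2*k*b^2))
      + 2*c*(a*d)| + |(-(2*(k-b)*d^2))| + |(-(2*d*(c*(1-c^2))/a))| := by
        gcongr; exact abs_add_le _ _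
    _ ≤ |2*(a-1)*(a*b) + 2*b*(1 - (1-c^2)^2/a^2) + (-(2*k*b^2))|
      + |2*c*(a*d)| + |(-(2*(k-b)*d^2))| + |(-(2*d*(c*(1-c^2))/a))| := by
        gcongr; exact abs_add_le _ _
    _ ≤ |2*(a-1)*(a*b) + 2*b*(1 - (1-c^2)^2/a^2)| + |(-(2*k*b^2))|
      + |2*c*(a*d)| + |(-(2*(k-b)*d^2))| + |(-(2*d*(c*(1-c^2))/a))| := by
        gcongr; exact abs_add_le _ _
    _ ≤ |2*(a-1)*(a*b)| + |2*b*(1 - (1-c^2)^2/a^2)| + |(-(2*k*b^2))|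
      + |2*c*(a*d)| + |(-(2*(k-b)*d^2))| + |(-(2*d*(c*(1-c^2))/a))| := by
        gcongr; exact abs_add_le _ _
    _ ≤ K * S := by rw [hKS]; linarith

set_option maxHeartbeats 1000000 in
lemma aux_triv {r₀ w₀ U₀ : ℝ} {ρmax : EReal} {r N w U κ ζ : ℝ → ℝ}
    (hS : IsShootingSolOn r₀ w₀ U₀ ρmax r N w U κ ζ)
    (hr1 : r₀ = 1) (hw1 : w₀ = 0) (hU1 : U₀ = 0)
    {ρ : ℝ} (hρ : ρ ∈ fwdDom ρmax) : r ρ = 1 ∧ w ρ = 0 := by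
  rcases eq_or_lt_of_le hρ.1 with h0 | hρ0
  · rw [← h0]
    exact ⟨by rw [hS.init_r, hr1], by rw [hS.init_w, hw1]⟩
  have hsub := subset_fwd hρ
  have hrc : ContinuousOn r (Icc 0 ρ) :=
    fun s hs => ((hS.ode_r s (hsub hs)).mono hsub).continuousWithinAt
  have hNc : ContinuousOn N (Icc 0 ρ) :=
    fun s hs => ((hS.ode_N s (hsub hs)).mono hsub).continuousWithinAt
  have hwc : ContinuousOn w (Icc 0 ρ) :=
    fun s hs => ((hS.ode_w s (hsub hs)).mono hsub).continuousWithinAt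
  have hUc : ContinuousOn U (Icc 0 ρ) :=
    fun s hs => ((hS.ode_U s (hsub hs)).mono hsub).continuousWithinAt
  have hκc : ContinuousOn κ (Icc 0 ρ) :=
    fun s hs => ((hS.ode_κ s (hsub hs)).mono hsub).continuousWithinAt
  have hrpos : ∀ s ∈ Icc (0:ℝ) ρ, 0 < r s := fun s hs => hS.r_pos s (hsub hs)
  have hne : (Icc (0:ℝ) ρ).Nonempty := ⟨0, le_refl 0, hρ0.le⟩
  -- upper bound M
  obtain ⟨M, hM1, habs⟩ : ∃ M, 1 ≤ M ∧ ∀ s ∈ Icc (0:ℝ) ρ,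
      |r s| ≤ M ∧ |N s| ≤ M ∧ |w s| ≤ M ∧ |U s| ≤ M ∧ |κ s| ≤ M := by
    have hBc : ContinuousOn (fun s => |r s| + |N s| + |w s| + |U s| + |κ s| + 1) (Icc 0 ρ) :=
      ((((hrc.abs.add hNc.abs).add hwc.abs).add hUc.abs).add hκc.abs).add continuousOn_const
    obtain ⟨x₀, hx₀mem, hx₀⟩ := isCompact_Icc.exists_isMaxOn hne hBc
    refine ⟨|r x₀| + |N x₀| + |w x₀| + |U x₀| + |κ x₀| + 1, ?_, ?_⟩
    · nlinarith [abs_nonneg (r x₀), abs_nonneg (N x₀), abs_nonneg (w x₀), abs_nonneg (U x₀),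
        abs_nonneg (κ x₀)]
    · intro s hs
      have h1 := hx₀ hs
      simp only [Set.mem_setOf_eq] at h1
      refine ⟨?_, ?_, ?_, ?_, ?_⟩ <;>
        nlinarith [abs_nonneg (r s), abs_nonneg (N s), abs_nonneg (w s), abs_nonneg (U s),
          abs_nonneg (κ s)]
  -- lower bound m for r
  obtain ⟨m, hm0, hmle⟩ : ∃ m, 0 < m ∧ ∀ s ∈ Icc (0:ℝ) ρ, m ≤ r s := by
    obtain ⟨xm, hxmmem, hxm⟩ := isCompact_Icc.exists_isMinOn hne hrc
    exact ⟨r xm, hrpos xm hxmmem, fun s hs => hxm hs⟩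
  obtain ⟨K, hKdef⟩ : ∃ K : ℝ, K = 8*M + (1 + M^2)/m + (M + 1 + M^2)*(1+2*M)/m^2 := ⟨_, rfl⟩
  -- the energy function
  set V : ℝ → ℝ := fun s => (r s - 1)^2 + N s^2 + w s^2 + U s^2 with hVdef
  have hVc : ContinuousOn V (Icc 0 ρ) :=
    ((((hrc.sub continuousOn_const).pow 2).add (hNc.pow 2)).add (hwc.pow 2)).add (hUc.pow 2)
  have hV0 : V 0 = 0 := by
    simp only [hVdef]
    rw [hS.init_r, hS.init_N, hS.init_w, hS.init_U, hr1, hw1, hU1]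
    ring
  have hVnn : ∀ t, 0 ≤ V t := by
    intro t; simp only [hVdef]; positivity
  set VD : ℝ → ℝ := fun t => 2*(r t - 1)*(r t*N t)
      + 2*N t*(1 - (1-w t^2)^2/r t^2 - κ t*N t)
      + 2*w t*(r t*U t)
      + 2*U t*(-(κ t - N t)*U t - w t*(1-w t^2)/r t) with hVDdef
  have hVd : ∀ t ∈ Ico (0:ℝ) ρ, HasDerivWithinAt V (VD t) (Ici t) t := by
    intro t ht
    have hmem : fwdDom ρmax ∈ 𝓝[Ici t] t := fwd_mem_nhdsWithin_Ici hρ ht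
    have hrF := (hS.ode_r t (hsub (Ico_subset_Icc_self ht))).mono_of_mem_nhdsWithin hmem
    have hNF := (hS.ode_N t (hsub (Ico_subset_Icc_self ht))).mono_of_mem_nhdsWithin hmem
    have hwF := (hS.ode_w t (hsub (Ico_subset_Icc_self ht))).mono_of_mem_nhdsWithin hmem
    have hUF := (hS.ode_U t (hsub (Ico_subset_Icc_self ht))).mono_of_mem_nhdsWithin hmem
    have hbig := ((((hrF.sub_const 1).pow 2).add (hNF.pow 2)).add (hwF.pow 2)).add (hUF.pow 2)
    show HasDerivWithinAt (fun s => (r s - 1)^2 + N s^2 + w s^2 + U s^2)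
      (2*(r t - 1)*(r t*N t) + 2*N t*(1 - (1-w t^2)^2/r t^2 - κ t*N t) + 2*w t*(r t*U t)
        + 2*U t*(-(κ t - N t)*U t - w t*(1-w t^2)/r t)) (Ici t) t
    refine hbig.congr_deriv ?_
    push_cast; ring
  have hbound : ∀ t ∈ Ico (0:ℝ) ρ, |VD t| ≤ K * V t := by
    intro t ht
    have htI : t ∈ Icc (0:ℝ) ρ := Ico_subset_Icc_self ht
    obtain ⟨haM, hbM, hcM, hdM, hkM⟩ := habs t htI
    have hma : m ≤ r t := hmle t htI
    have hVt : V t = (r t - 1)^2 + (N t)^2 + (w t)^2 + (U t)^2 := by simp only [hVdef]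
    have hsplit : VD t = 2*(r t - 1)*(r t * N t) + 2*(N t)*(1 - (1-(w t)^2)^2/(r t)^2)
        + (-(2*(κ t)*(N t)^2))
        + 2*(w t)*(r t * U t) + (-(2*(κ t - N t)*(U t)^2))
        + (-(2*(U t)*((w t)*(1-(w t)^2))/(r t))) := by
      simp only [hVDdef]
      ring
    rw [hsplit, hVt]
    exact VD_bound hM1 hm0 hma haM hbM hcM hdM hkM hKdef
  -- Gronwall
  have hgron := norm_le_gronwallBound_of_norm_deriv_right_le (δ := 0) (K := K) (ε := 0)
    hVc hVd (by rw [Real.norm_eq_abs, hV0, abs_zero]) ?_ ρ ⟨hρ0.le, le_refl ρ⟩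
  swap
  · intro t ht
    rw [Real.norm_eq_abs, Real.norm_eq_abs, abs_of_nonneg (hVnn t), add_zero]
    exact hbound t ht
  rw [Real.norm_eq_abs] at hgron
  have hgb : gronwallBound 0 K 0 (ρ - 0) = 0 := by simp [gronwallBound]
  rw [hgb] at hgron
  have hVρ : V ρ = 0 := le_antisymm (le_of_abs_le hgron) (hVnn ρ)
  simp only [hVdef] at hVρ
  constructor
  · have h1 : (r ρ - 1)^2 = 0 := by
      nlinarith [sq_nonneg (r ρ - 1), sq_nonneg (N ρ), sq_nonneg (w ρ), sq_nonneg (U ρ)]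
    have h2 := (pow_eq_zero_iff two_ne_zero).mp h1
    linarith
  · have h1 : (w ρ)^2 = 0 := by
      nlinarith [sq_nonneg (r ρ - 1), sq_nonneg (N ρ), sq_nonneg (w ρ), sq_nonneg (U ρ)]
    exact (pow_eq_zero_iff two_ne_zero).mp h1

/-- For `r₀ ≥ 1`, either the solution is the trivial one with `r ≡ 1`, `w ≡ 0`
(and `(r₀, w₀, U₀) = (1, 0, 0)`), or `N > 0` at every `ρ > 0` in the domain up to which
`|w| ≤ 1` has held. -/
theorem N_positive_for_large_r0 (r₀ w₀ U₀ : ℝ) (hadm : Admissible r₀ w₀ U₀)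
    (ρmax : EReal) (r N w U κ ζ : ℝ → ℝ)
    (hsol : IsMaximalShootingSol r₀ w₀ U₀ ρmax r N w U κ ζ)
    (hr₀ : 1 ≤ r₀) :
    (r₀ = 1 ∧ w₀ = 0 ∧ U₀ = 0 ∧ ∀ ρ ∈ fwdDom ρmax, r ρ = 1 ∧ w ρ = 0) ∨
    (∀ ρ ∈ fwdDom ρmax, 0 < ρ → (∀ s : ℝ, 0 ≤ s → s ≤ ρ → |w s| ≤ 1) → 0 < N ρ) := by
  obtain ⟨hρpos, hSS, hmax⟩ := hsol
  by_cases hdata : r₀ = 1 ∧ w₀ = 0 ∧ U₀ = 0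
  · exact Or.inl ⟨hdata.1, hdata.2.1, hdata.2.2,
      fun ρ hρ => aux_triv hSS hdata.1 hdata.2.1 hdata.2.2 hρ⟩
  · exact Or.inr fun ρ hρ hρ0 hw => aux_pos hSS hr₀ hdata hρ hρ0 hw
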